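/- In the algebra P_n, for every x,y in P_n and every d in the subspace D_n = span{c_i, d_{ij}, e_{ij}}, the operators V_{d,y} and V_{y,d} are zero, i.e., (d·a)·y = 0 and (y·a)·d = 0 for all a in P_n. Moreover (A_n + span{d_{ij}, e_{ij}})·V_{x,y} = 0, i.e., (x·u)·y = 0 whenever u lies in the span of the a_{ij}, b_{ij}, d_{ij}, e_{ij}. -/

import Mathlib

inductive PBasis (n : ℕ) : Type
  | a : Fin n → Fin n → PBasis n
  | b : Fin n → Fin n → PBasis n
  | c : Fin n → PBasis n
  | d : Fin n → Fin n → PBasis n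
  | e : Fin n → Fin n → PBasis n
  deriving DecidableEq

abbrev Pn (F : Type*) [Field F] (n : ℕ) : Type _ := PBasis n →₀ F

open PBasis in
noncomputable def mulB (F : Type*) [Field F] {n : ℕ} : PBasis n → PBasis n → Pn F n
  | a i j, c k => if k = i then Finsupp.single (d i j) 1 else 0
  | b i j, c k => if k = i then Finsupp.single (e i j) 1 else 0
  | a i j, e k l => if i = k ∧ j = l then Finsupp.single (c j) 1 else 0
  | e k l, a i j => if i = k ∧ j = l then Finsupp.single (c j) 1 else 0
  | b i j, d k l => if i = k ∧ j = l then -Finsupp.single (c j) 1 else 0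
  | d k l, b i j => if i = k ∧ j = l then -Finsupp.single (c j) 1 else 0
  | _, _ => 0

noncomputable def mulLin (F : Type*) [Field F] {n : ℕ} :
    Pn F n →ₗ[F] Pn F n →ₗ[F] Pn F n :=
  Finsupp.lift (Pn F n →ₗ[F] Pn F n) F (PBasis n)
    (fun u => Finsupp.lift (Pn F n) F (PBasis n) (fun v => mulB F u v))

noncomputable instance (F : Type*) [Field F] (n : ℕ) : Mul (Pn F n) :=
  ⟨fun x y => mulLin F x y⟩

noncomputable def Cspan (F : Type*) [Field F] (n : ℕ) : Submodule F (Pn F n) :=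
  Submodule.span F (Set.range fun i => (Finsupp.single (PBasis.c i) 1 : Pn F n))

noncomputable def Aspan (F : Type*) [Field F] (n : ℕ) : Submodule F (Pn F n) :=
  Submodule.span F {x : Pn F n | ∃ i j,
    x = Finsupp.single (PBasis.a i j) 1 ∨ x = Finsupp.single (PBasis.b i j) 1}

noncomputable def Cbarspan (F : Type*) [Field F] (n : ℕ) : Submodule F (Pn F n) :=
  Submodule.span F {x : Pn F n | ∃ i j,
    x = Finsupp.single (PBasis.d i j) 1 ∨ x = Finsupp.single (PBasis.e i j) 1}

noncomputable def Dspan (F : Type*) [Field F] (n : ℕ) : Submodule F (Pn F n) :=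
  Submodule.span F {x : Pn F n | (∃ i, x = Finsupp.single (PBasis.c i) 1) ∨
    ∃ i j, x = Finsupp.single (PBasis.d i j) 1 ∨ x = Finsupp.single (PBasis.e i j) 1}


section Aux
open PBasis
variable {F : Type*} [Field F] {n : ℕ}

lemma mul_def (x y : Pn F n) : x * y = mulLin F x y := rfl

lemma single_mul_single (u v : PBasis n) (r s : F) :
    (Finsupp.single u r : Pn F n) * Finsupp.single v s = (r * s) • mulB F u v := by
  show mulLin F _ _ = _
  simp [mulLin, mul_smul]

lemma mul_mem_S (S : Submodule F (Pn F n))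
    (h : ∀ u v : PBasis n, mulB F u v ∈ S) (x y : Pn F n) : x * y ∈ S := by
  induction x using Finsupp.induction_linear with
  | zero => rw [mul_def, map_zero]; exact S.zero_mem
  | add f g hf hg => rw [mul_def, map_add]; exact S.add_mem hf hg
  | single a r =>
    induction y using Finsupp.induction_linear with
    | zero => rw [mul_def, map_zero]; exact S.zero_mem
    | add f g hf hg => rw [mul_def, map_add]; exact S.add_mem hf hg
    | single b s =>
      rw [single_mul_single]
      exact S.smul_mem _ (h a b)

lemma mulB_c_left (i : Fin n) (v : PBasis n) : mulB F (c i) v = 0 := by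
  cases v <;> rfl

lemma c_mul_zero (i : Fin n) (y : Pn F n) : (Finsupp.single (c i) 1 : Pn F n) * y = 0 := by
  induction y using Finsupp.induction_linear with
  | zero => rw [mul_def, map_zero]
  | add f g hf hg => rw [mul_def, map_add]; rw [mul_def] at hf hg; rw [hf, hg, add_zero]
  | single b s => rw [single_mul_single, mulB_c_left, smul_zero]

lemma c_mem_Cspan (j : Fin n) : (Finsupp.single (c j) 1 : Pn F n) ∈ Cspan F n :=
  Submodule.subset_span ⟨j, rfl⟩

lemma Cspan_mul_zero {x : Pn F n} (hx : x ∈ Cspan F n) (y : Pn F n) : x * y = 0 := by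
  induction hx using Submodule.span_induction with
  | mem z hz => obtain ⟨i, rfl⟩ := hz; exact c_mul_zero i y
  | zero => rw [mul_def, map_zero]; rfl
  | add a b _ _ ha hb =>
      rw [mul_def, map_add, LinearMap.add_apply, ← mul_def, ← mul_def, ha, hb, add_zero]
  | smul r a _ ha => rw [mul_def, map_smul, LinearMap.smul_apply, ← mul_def, ha, smul_zero]

lemma mulB_mem_Cspan_of_left_D (u v : PBasis n)
    (hu : (∃ i, u = c i) ∨ ∃ i j, u = d i j ∨ u = e i j) :
    mulB F u v ∈ Cspan F n := by
  cases u <;> cases v <;>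
    first
    | exact (Cspan F n).zero_mem
    | (simp only [mulB]; split_ifs <;>
        first
        | exact (Cspan F n).zero_mem
        | exact c_mem_Cspan _
        | exact (Cspan F n).neg_mem (c_mem_Cspan _))
    | (rcases hu with ⟨_, h⟩ | ⟨_, _, h | h⟩ <;> cases h <;> done)

lemma mulB_mem_Cspan_of_right_ne_c (u v : PBasis n) (hv : ∀ k, v ≠ c k) :
    mulB F u v ∈ Cspan F n := by
  cases u <;> cases v <;>
    first
    | exact absurd rfl (hv _)
    | exact (Cspan F n).zero_mem
    | (simp only [mulB]; split_ifs <;>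
        first
        | exact (Cspan F n).zero_mem
        | exact c_mem_Cspan _
        | exact (Cspan F n).neg_mem (c_mem_Cspan _))

lemma mulB_mem_Dspan (u v : PBasis n) : mulB F u v ∈ Dspan F n := by
  have hc : ∀ j : Fin n, (Finsupp.single (c j) 1 : Pn F n) ∈ Dspan F n :=
    fun j => Submodule.subset_span (Or.inl ⟨j, rfl⟩)
  cases u <;> cases v <;>
    first
    | exact (Dspan F n).zero_mem
    | (simp only [mulB]; split_ifs <;>
        first
        | exact (Dspan F n).zero_mem
        | exact hc _
        | exact (Dspan F n).neg_mem (hc _)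
        | exact Submodule.subset_span (Or.inr ⟨_, _, Or.inl rfl⟩)
        | exact Submodule.subset_span (Or.inr ⟨_, _, Or.inr rfl⟩))

lemma mulB_DD_zero (u v : PBasis n)
    (hu : (∃ i, u = c i) ∨ ∃ i j, u = d i j ∨ u = e i j)
    (hv : (∃ i, v = c i) ∨ ∃ i j, v = d i j ∨ v = e i j) :
    mulB F u v = (0 : Pn F n) := by
  cases u <;> cases v <;>
    first
    | rfl
    | (rcases hu with ⟨_, h⟩ | ⟨_, _, h | h⟩ <;> cases h <;> done)
    | (rcases hv with ⟨_, h⟩ | ⟨_, _, h | h⟩ <;> cases h <;> done)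

lemma single_mul_mem_Cspan_of_left_D (u : PBasis n)
    (hu : (∃ i, u = c i) ∨ ∃ i j, u = d i j ∨ u = e i j) (y : Pn F n) :
    (Finsupp.single u 1 : Pn F n) * y ∈ Cspan F n := by
  induction y using Finsupp.induction_linear with
  | zero => rw [mul_def, map_zero]; exact (Cspan F n).zero_mem
  | add f g hf hg => rw [mul_def, map_add]; exact (Cspan F n).add_mem hf hg
  | single b s =>
    rw [single_mul_single]
    exact (Cspan F n).smul_mem _ (mulB_mem_Cspan_of_left_D u b hu)

lemma D_mul_mem_Cspan {x : Pn F n} (hx : x ∈ Dspan F n) (y : Pn F n) :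
    x * y ∈ Cspan F n := by
  induction hx using Submodule.span_induction with
  | mem z hz =>
      rcases hz with ⟨i, rfl⟩ | ⟨i, j, rfl | rfl⟩
      · exact single_mul_mem_Cspan_of_left_D _ (Or.inl ⟨i, rfl⟩) y
      · exact single_mul_mem_Cspan_of_left_D _ (Or.inr ⟨i, j, Or.inl rfl⟩) y
      · exact single_mul_mem_Cspan_of_left_D _ (Or.inr ⟨i, j, Or.inr rfl⟩) y
  | zero => rw [mul_def, map_zero]; exact (Cspan F n).zero_mem
  | add a b _ _ ha hb =>
      rw [mul_def, map_add, LinearMap.add_apply, ← mul_def, ← mul_def]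
      exact (Cspan F n).add_mem ha hb
  | smul r a _ ha =>
      rw [mul_def, map_smul, LinearMap.smul_apply, ← mul_def]
      exact (Cspan F n).smul_mem _ ha

lemma mul_single_mem_Cspan_of_right_ne_c (v : PBasis n) (hv : ∀ k, v ≠ c k) (x : Pn F n) :
    x * (Finsupp.single v 1 : Pn F n) ∈ Cspan F n := by
  induction x using Finsupp.induction_linear with
  | zero => rw [mul_def, map_zero]; exact (Cspan F n).zero_mem
  | add f g hf hg =>
      rw [mul_def, map_add, LinearMap.add_apply, ← mul_def, ← mul_def]
      exact (Cspan F n).add_mem hf hg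
  | single a r =>
    rw [single_mul_single]
    exact (Cspan F n).smul_mem _ (mulB_mem_Cspan_of_right_ne_c a v hv)

lemma mul_mem_Cspan_of_right_Aspan {u : Pn F n} (hu : u ∈ Aspan F n) (x : Pn F n) :
    x * u ∈ Cspan F n := by
  induction hu using Submodule.span_induction with
  | mem z hz =>
      obtain ⟨i, j, rfl | rfl⟩ := hz
      · exact mul_single_mem_Cspan_of_right_ne_c _ (fun k h => by cases h) x
      · exact mul_single_mem_Cspan_of_right_ne_c _ (fun k h => by cases h) x
  | zero => rw [mul_def, map_zero]; exact (Cspan F n).zero_mem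
  | add a b _ _ ha hb =>
      rw [show x * (a + b) = x * a + x * b from map_add (mulLin F x) a b]
      exact (Cspan F n).add_mem ha hb
  | smul r a _ ha =>
      rw [show x * (r • a) = r • (x * a) from map_smul (mulLin F x) r a]
      exact (Cspan F n).smul_mem _ ha

lemma mul_mem_Cspan_of_right_Cbarspan {u : Pn F n} (hu : u ∈ Cbarspan F n) (x : Pn F n) :
    x * u ∈ Cspan F n := by
  induction hu using Submodule.span_induction with
  | mem z hz =>
      obtain ⟨i, j, rfl | rfl⟩ := hz
      · exact mul_single_mem_Cspan_of_right_ne_c _ (fun k h => by cases h) x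
      · exact mul_single_mem_Cspan_of_right_ne_c _ (fun k h => by cases h) x
  | zero => rw [mul_def, map_zero]; exact (Cspan F n).zero_mem
  | add a b _ _ ha hb =>
      rw [show x * (a + b) = x * a + x * b from map_add (mulLin F x) a b]
      exact (Cspan F n).add_mem ha hb
  | smul r a _ ha =>
      rw [show x * (r • a) = r • (x * a) from map_smul (mulLin F x) r a]
      exact (Cspan F n).smul_mem _ ha

lemma mul_mem_Cspan_of_right_ACbar {u : Pn F n}
    (hu : u ∈ Aspan F n + Cbarspan F n) (x : Pn F n) : x * u ∈ Cspan F n := by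
  rw [Submodule.add_eq_sup, Submodule.mem_sup] at hu
  obtain ⟨p, hp, q, hq, rfl⟩ := hu
  rw [show x * (p + q) = x * p + x * q from map_add (mulLin F x) p q]
  exact (Cspan F n).add_mem (mul_mem_Cspan_of_right_Aspan hp x)
    (mul_mem_Cspan_of_right_Cbarspan hq x)

lemma single_mul_Dspan_zero (u : PBasis n)
    (hu : (∃ i, u = c i) ∨ ∃ i j, u = d i j ∨ u = e i j)
    {y : Pn F n} (hy : y ∈ Dspan F n) :
    (Finsupp.single u 1 : Pn F n) * y = 0 := by
  induction hy using Submodule.span_induction with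
  | mem w hw =>
      obtain ⟨v, rfl, hv⟩ : ∃ v : PBasis n, w = Finsupp.single v (1:F) ∧
          ((∃ i, v = c i) ∨ ∃ i j, v = d i j ∨ v = e i j) := by
        rcases hw with ⟨i, rfl⟩ | ⟨i, j, rfl | rfl⟩
        exacts [⟨_, rfl, Or.inl ⟨i, rfl⟩⟩, ⟨_, rfl, Or.inr ⟨i, j, Or.inl rfl⟩⟩,
          ⟨_, rfl, Or.inr ⟨i, j, Or.inr rfl⟩⟩]
      rw [single_mul_single, mulB_DD_zero u v hu hv, smul_zero]
  | zero => exact map_zero (mulLin F _)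
  | add a b _ _ ha hb =>
      rw [show _ * (a + b) = _ * a + _ * b from map_add (mulLin F _) a b, ha, hb, add_zero]
  | smul r a _ ha =>
      rw [show _ * (r • a) = r • (_ * a) from map_smul (mulLin F _) r a, ha, smul_zero]

lemma Dspan_mul_Dspan_zero {x y : Pn F n} (hx : x ∈ Dspan F n) (hy : y ∈ Dspan F n) :
    x * y = 0 := by
  induction hx using Submodule.span_induction with
  | mem z hz =>
      rcases hz with ⟨i, rfl⟩ | ⟨i, j, rfl | rfl⟩
      · exact single_mul_Dspan_zero _ (Or.inl ⟨i, rfl⟩) hy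
      · exact single_mul_Dspan_zero _ (Or.inr ⟨i, j, Or.inl rfl⟩) hy
      · exact single_mul_Dspan_zero _ (Or.inr ⟨i, j, Or.inr rfl⟩) hy
  | zero => rw [mul_def, map_zero]; rfl
  | add a b _ _ ha hb =>
      rw [mul_def, map_add, LinearMap.add_apply, ← mul_def, ← mul_def, ha, hb, add_zero]
  | smul r a _ ha => rw [mul_def, map_smul, LinearMap.smul_apply, ← mul_def, ha, smul_zero]

end Aux

theorem stmt (F : Type*) [Field F] (n : ℕ) :
    (∀ d y u : Pn F n, d ∈ Dspan F n → (d * u) * y = 0 ∧ (y * u) * d = 0) ∧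
    (∀ x y u : Pn F n, u ∈ Aspan F n + Cbarspan F n → (x * u) * y = 0) := by
  constructor
  · intro d y u hd
    constructor
    · exact Cspan_mul_zero (D_mul_mem_Cspan hd u) y
    · exact Dspan_mul_Dspan_zero (mul_mem_S (Dspan F n) mulB_mem_Dspan y u) hd
  · intro x y u hu
    exact Cspan_mul_zero (mul_mem_Cspan_of_right_ACbar hu x) y
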